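/- If (y - w̄)/(y - (1-δ)(w̄-w̲)) < c_ε < (y - w̲)/y, where w̄ = k_u - v and w̲ = k_d - v, and w̲ ≥ 0, then x̄ = (δy + (1-δ)w̲)/(1 - (1-δ)c_ε) solves the clearing fixed point equation x̄ = δ·min{(k_u + c_ε x̄ - v)⁺, y} + (1-δ)·min{(k_d + c_ε x̄ - v)⁺, y}, with the down-shock branch defaulting (k_d + c_ε x̄ - v < y) and the up-shock branch not defaulting (k_u + c_ε x̄ - v ≥ y). -/

import Mathlib

/-- If `(y - w̄)/(y - (1-δ)(w̄ - w̲)) < c_ε < (y - w̲)/y`, where `w̄ = k_u - v` and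
`w̲ = k_d - v ≥ 0`, then `x̄ = (δ y + (1-δ) w̲)/(1 - (1-δ) c_ε)` solves the clearing
fixed point equation, with the down-shock branch defaulting and the up-shock branch not. -/
theorem stmt_4 (y v ku kd δ c : ℝ) (hy : 0 < y) (hv : 0 ≤ v)
    (hk : ku > kd) (hkd : 0 < kd) (hδ : δ ∈ Set.Ioo (0:ℝ) 1)
    (hc : c ∈ Set.Ioo (0:ℝ) 1)
    (hwlo : 0 ≤ kd - v)
    (hlow : (y - (ku - v)) / (y - (1 - δ) * ((ku - v) - (kd - v))) < c)
    (hhigh : c < (y - (kd - v)) / y) :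
    let x := (δ * y + (1 - δ) * (kd - v)) / (1 - (1 - δ) * c)
    x = δ * min (max (ku + c * x - v) 0) y + (1 - δ) * min (max (kd + c * x - v) 0) y ∧
    kd + c * x - v < y ∧ ku + c * x - v ≥ y := by
  obtain ⟨hδ0, hδ1⟩ := hδ
  obtain ⟨hc0, hc1⟩ := hc
  intro x
  have hD : 0 < 1 - (1 - δ) * c := by nlinarith
  have hx0 : 0 ≤ x := div_nonneg (by nlinarith) hD.le
  have hkey : y - (ku - v) ≤ c * (y - (1 - δ) * ((ku - v) - (kd - v))) := by
    rcases lt_trichotomy (y - (1 - δ) * ((ku - v) - (kd - v))) 0 with h | h | h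
    · exfalso
      rw [div_lt_iff_of_neg h] at hlow
      nlinarith
    · rw [h, mul_zero]; nlinarith
    · exact le_of_lt ((div_lt_iff₀ h).mp hlow)
  have hxeq : x * (1 - (1 - δ) * c) = δ * y + (1 - δ) * (kd - v) := by
    exact div_mul_cancel₀ _ hD.ne'
  have hup : ku + c * x - v ≥ y := by nlinarith [mul_nonneg hc0.le hx0]
  have h2 : c * y < y - (kd - v) := (lt_div_iff₀ hy).mp hhigh
  have hdn : kd + c * x - v < y := by nlinarith
  refine ⟨?_, hdn, hup⟩
  have hm1 : max (ku + c * x - v) 0 = ku + c * x - v :=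
    max_eq_left (by nlinarith [mul_nonneg hc0.le hx0])
  have hm2 : max (kd + c * x - v) 0 = kd + c * x - v :=
    max_eq_left (by nlinarith [mul_nonneg hc0.le hx0])
  rw [hm1, hm2, min_eq_right hup, min_eq_left hdn.le]
  nlinarith
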